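/- Let R be the subring of the free ring ℤ⟨a,b,c⟩ (on three noncommuting generators, without identity) generated by the five elements ba, ba², a³, a²c, ac. Then R is finitely generated but not finitely presented as a ring. -/

import Mathlib

/-- The free non-unital associative `K`-algebra on `X`: the semigroup algebra of the free
semigroup `X⁺` over `K`. -/
abbrev FreeNUAlg (K X : Type*) [CommRing K] : Type _ := MonoidAlgebra K (FreeSemigroup X)

/-- The two-sided ideal (as a `K`-submodule closed under left and right multiplication)
generated by a set in a non-unital `K`-algebra. -/
def idealSpan (K : Type*) {A : Type*} [CommRing K] [NonUnitalRing A] [Module K A]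
    (s : Set A) : Submodule K A :=
  sInf {J : Submodule K A | s ⊆ J ∧ ∀ a b : A, b ∈ J → a * b ∈ J ∧ b * a ∈ J}

/-- A non-unital `K`-algebra is finitely generated if some finite subset generates it as a
`K`-algebra. -/
def NUAlgFG (K A : Type*) [CommRing K] [NonUnitalRing A] [Module K A]
    [IsScalarTower K A A] [SMulCommClass K A A] : Prop :=
  ∃ s : Finset A, NonUnitalAlgebra.adjoin K (s : Set A) = ⊤

/-- A non-unital `K`-algebra is finitely presented if it is isomorphic to the quotient of a
free algebra `K⟨X⟩` on a finite set `X` by a finitely generated two-sided ideal, i.e. there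
is a surjection from some `K⟨X⟩`, `X` finite, whose kernel is a finitely generated
two-sided ideal. -/
def NUAlgFP (K A : Type*) [CommRing K] [NonUnitalRing A] [Module K A]
    [IsScalarTower K A A] [SMulCommClass K A A] : Prop :=
  ∃ (n : ℕ) (f : FreeNUAlg K (Fin n) →ₙₐ[K] A),
    Function.Surjective f ∧
      ∃ s : Finset (FreeNUAlg K (Fin n)),
        ∀ x, f x = 0 ↔ x ∈ idealSpan K (s : Set (FreeNUAlg K (Fin n)))

/-- The generator `a`, `b`, `c` of the free ring `ℤ⟨a,b,c⟩`, realized as the elements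
`a = single(a) 1` etc. of the semigroup ring of the free semigroup on three letters. -/
noncomputable def gen (i : Fin 3) : FreeNUAlg ℤ (Fin 3) :=
  MonoidAlgebra.single (FreeSemigroup.of i) (1 : ℤ)

/-- The subring of `ℤ⟨a,b,c⟩` generated by `ba, ba², a³, a²c, ac`. -/
noncomputable def exampleSubring : NonUnitalSubring (FreeNUAlg ℤ (Fin 3)) :=
  NonUnitalSubring.closure
    {gen 1 * gen 0, gen 1 * gen 0 * gen 0, gen 0 * gen 0 * gen 0,
      gen 0 * gen 0 * gen 2, gen 0 * gen 2}


open FreeSemigroup List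

set_option linter.dupNamespace false

namespace Ex15

open FreeSemigroup List


/-! ### Words -/

def toL {α : Type*} (x : FreeSemigroup α) : List α := x.1 :: x.2

lemma toL_mul {α : Type*} (x y : FreeSemigroup α) : toL (x * y) = toL x ++ toL y := rfl

lemma toL_of {α : Type*} (x : α) : toL (FreeSemigroup.of x) = [x] := rfl

lemma toL_injective {α : Type*} : Function.Injective (toL (α := α)) := by
  rintro ⟨h, t⟩ ⟨h', t'⟩ e
  simpa [toL, FreeSemigroup.ext_iff] using e

lemma length_toL {α : Type*} (x : FreeSemigroup α) : (toL x).length = x.length := by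
  cases x; simp [toL, FreeSemigroup.length]

def blockL : Fin 5 → List (Fin 3) := ![[1,0],[1,0,0],[0,0,0],[0,0,2],[0,2]]

def blockS : Fin 5 → FreeSemigroup (Fin 3) :=
  ![of 1 * of 0, of 1 * of 0 * of 0, of 0 * of 0 * of 0, of 0 * of 0 * of 2, of 0 * of 2]

lemma toL_blockS : ∀ i, toL (blockS i) = blockL i := by decide

lemma blockL_ne_nil : ∀ i, blockL i ≠ [] := by decide

noncomputable def W : FreeSemigroup (Fin 5) →ₙ* FreeSemigroup (Fin 3) :=
  FreeSemigroup.lift blockS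

lemma toL_W (u : FreeSemigroup (Fin 5)) : toL (W u) = (toL u).flatMap blockL := by
  induction u using FreeSemigroup.recOnMul with
  | ih1 x =>
    simp only [W, FreeSemigroup.lift_of, toL_of, flatMap_cons, flatMap_nil, append_nil, toL_blockS]
  | ih2 x y hx hy => simp [map_mul, toL_mul, hx, hy]

/-! ### The special words -/

def qw : ℕ → FreeSemigroup (Fin 5)
  | 0 => of 3
  | (k+1) => of 2 * qw k

def q'w : ℕ → FreeSemigroup (Fin 5)
  | 0 => of 4
  | (k+1) => of 2 * q'w k

def pw : ℕ → FreeSemigroup (Fin 5)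
  | 0 => of 0
  | (k+1) => pw k * of 2

def ww (k : ℕ) : FreeSemigroup (Fin 5) := of 0 * qw k

def ww' (k : ℕ) : FreeSemigroup (Fin 5) := of 1 * q'w k

lemma toL_qw (j : ℕ) : toL (qw j) = replicate j 2 ++ [3] := by
  induction j with
  | zero => rfl
  | succ j ih => simp [qw, toL_mul, toL_of, ih, replicate_succ]

lemma toL_q'w (j : ℕ) : toL (q'w j) = replicate j 2 ++ [4] := by
  induction j with
  | zero => rfl
  | succ j ih => simp [q'w, toL_mul, toL_of, ih, replicate_succ]

lemma toL_pw (i : ℕ) : toL (pw i) = 0 :: replicate i 2 := by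
  induction i with
  | zero => rfl
  | succ i ih => simp [pw, toL_mul, toL_of, ih, replicate_succ']

lemma toL_ww (k : ℕ) : toL (ww k) = 0 :: (replicate k 2 ++ [3]) := by
  simp [ww, toL_mul, toL_of, toL_qw]

lemma toL_ww' (k : ℕ) : toL (ww' k) = 1 :: (replicate k 2 ++ [4]) := by
  simp [ww', toL_mul, toL_of, toL_q'w]

lemma length_ww (k : ℕ) : (toL (ww k)).length = k + 2 := by simp [toL_ww]

/-! ### Combinatorial lemmas about factorizations -/

lemma lemNil : ∀ (l : List (Fin 5)), l.flatMap blockL = [] → l = [] := by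
  intro l h
  cases l with
  | nil => rfl
  | cons x t => rw [flatMap_cons, append_eq_nil_iff] at h; exact absurd h.1 (blockL_ne_nil x)

lemma lemA : ∀ (l : List (Fin 5)) (m : ℕ), l.flatMap blockL = replicate m 0 →
    ∃ j, m = 3 * j ∧ l = replicate j 2 := by
  intro l
  induction l with
  | nil => intro m h; exact ⟨0, by simpa using h.symm, rfl⟩
  | cons x t ih =>
    intro m h
    rw [flatMap_cons] at h
    fin_cases x <;> simp [blockL] at h
    · rcases Nat.eq_zero_or_pos m with hm | hm
      · simp [hm] at h
      · obtain ⟨m', rfl⟩ := Nat.exists_eq_succ_of_ne_zero hm.ne'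
        simp [replicate_succ] at h
    · rcases Nat.eq_zero_or_pos m with hm | hm
      · simp [hm] at h
      · obtain ⟨m', rfl⟩ := Nat.exists_eq_succ_of_ne_zero hm.ne'
        simp [replicate_succ] at h
    · match m, h with
      | (m+3), h =>
        simp [replicate_succ] at h
        obtain ⟨j, rfl, rfl⟩ := ih m h
        exact ⟨j + 1, by ring, by simp [replicate_succ]⟩
      | 0, h => simp at h
      | 1, h => simp [replicate_succ] at h
      | 2, h => simp [replicate_succ] at h
    · match m, h with
      | (m+3), h => simp [replicate_succ] at h
      | 0, h => simp at h
      | 1, h => simp [replicate_succ] at h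
      | 2, h => simp [replicate_succ] at h
    · match m, h with
      | (m+2), h => simp [replicate_succ] at h
      | 0, h => simp at h
      | 1, h => simp [replicate_succ] at h

lemma lemB : ∀ (l : List (Fin 5)) (m : ℕ), l.flatMap blockL = replicate m 0 ++ [2] →
    ∃ j, (m = 3*j+2 ∧ l = replicate j 2 ++ [3]) ∨ (m = 3*j+1 ∧ l = replicate j 2 ++ [4]) := by
  intro l
  induction l with
  | nil => intro m h; simp at h
  | cons x t ih =>
    intro m h
    rw [flatMap_cons] at h
    fin_cases x <;> simp [blockL] at h
    · match m, h with
      | 0, h => simp at h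
      | (m+1), h => simp [replicate_succ] at h
    · match m, h with
      | 0, h => simp at h
      | (m+1), h => simp [replicate_succ] at h
    · match m, h with
      | 0, h => simp at h
      | 1, h => simp [replicate_succ] at h
      | 2, h => simp [replicate_succ] at h
      | (m+3), h =>
        simp [replicate_succ] at h
        obtain ⟨j, hj⟩ := ih m h
        refine ⟨j+1, ?_⟩
        rcases hj with ⟨h1, h2⟩ | ⟨h1, h2⟩
        · exact Or.inl ⟨by omega, by simp [replicate_succ, h2]⟩
        · exact Or.inr ⟨by omega, by simp [replicate_succ, h2]⟩
    · match m, h with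
      | 0, h => simp at h
      | 1, h => simp [replicate_succ] at h
      | 2, h =>
        have h0 : (t.flatMap blockL).length = 0 := by
          have := congrArg List.length h; simp [blockL] at this ⊢; omega
        rw [List.length_eq_zero_iff] at h0
        exact ⟨0, Or.inl ⟨rfl, by simp [lemNil _ h0]⟩⟩
      | (m+3), h => simp [replicate_succ] at h
    · match m, h with
      | 0, h => simp at h
      | 1, h =>
        have h0 : (t.flatMap blockL).length = 0 := by
          have := congrArg List.length h; simp [blockL] at this ⊢; omega
        rw [List.length_eq_zero_iff] at h0
        exact ⟨0, Or.inr ⟨rfl, by simp [lemNil _ h0]⟩⟩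
      | (m+2), h => simp [replicate_succ] at h

lemma lemC : ∀ (l : List (Fin 5)) (m : ℕ), l.flatMap blockL = 1 :: replicate m 0 →
    ∃ i, (m = 3*i+1 ∧ l = 0 :: replicate i 2) ∨ (m = 3*i+2 ∧ l = 1 :: replicate i 2) := by
  intro l
  cases l with
  | nil => intro m h; simp at h
  | cons x t =>
    intro m h
    rw [flatMap_cons] at h
    fin_cases x <;> simp [blockL] at h
    · match m, h with
      | 0, h => simp at h
      | (m+1), h =>
        simp [replicate_succ] at h
        obtain ⟨j, rfl, rfl⟩ := lemA t m h
        exact ⟨j, Or.inl ⟨by omega, rfl⟩⟩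
    · match m, h with
      | 0, h => simp at h
      | 1, h => simp [replicate_succ] at h
      | (m+2), h =>
        simp [replicate_succ] at h
        obtain ⟨j, rfl, rfl⟩ := lemA t m h
        exact ⟨j, Or.inr ⟨by omega, rfl⟩⟩


/-! ### Consequences at the level of FreeSemigroup -/

lemma flatMap_rep2 (j : ℕ) : (replicate j (2 : Fin 5)).flatMap blockL = replicate (3*j) 0 := by
  induction j with
  | zero => rfl
  | succ j ih =>
    rw [replicate_succ, flatMap_cons, ih, show 3*(j+1) = 3 + 3*j from by ring,
      List.replicate_add]
    simp [blockL, replicate_succ]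

lemma toL_W_qw (j : ℕ) : toL (W (qw j)) = replicate (3*j+2) 0 ++ [2] := by
  rw [toL_W, toL_qw, flatMap_append, flatMap_rep2]
  have : 3*j+2 = 3*j + 2 := rfl
  rw [show (3*j+2) = 3*j + 2 from rfl, List.replicate_add, List.append_assoc]
  simp [blockL]

lemma toL_W_pw (i : ℕ) : toL (W (pw i)) = 1 :: replicate (3*i+1) 0 := by
  rw [toL_W, toL_pw, flatMap_cons, flatMap_rep2]
  rw [show (3*i+1) = 1 + 3*i from by ring, List.replicate_add]
  simp [blockL]

lemma weq (k : ℕ) : W (ww k) = W (ww' k) := by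
  apply toL_injective
  rw [toL_W, toL_W]
  induction k with
  | zero => decide
  | succ k ih =>
    rw [toL_ww, toL_ww'] at ih ⊢
    simp only [replicate_succ, flatMap_cons, cons_append] at ih ⊢
    simp [blockL] at ih ⊢
    exact ih

lemma fiber_qw {j : ℕ} {u : FreeSemigroup (Fin 5)} (h : W u = W (qw j)) : u = qw j := by
  apply toL_injective
  have h' : (toL u).flatMap blockL = replicate (3*j+2) 0 ++ [2] := by
    rw [← toL_W, h, toL_W_qw]
  obtain ⟨j', hj'⟩ := lemB _ _ h'
  rcases hj' with ⟨h1, h2⟩ | ⟨h1, h2⟩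
  · have : j' = j := by omega
    rw [h2, this, toL_qw]
  · omega

lemma fiber_pw {i : ℕ} {u : FreeSemigroup (Fin 5)} (h : W u = W (pw i)) : u = pw i := by
  apply toL_injective
  have h' : (toL u).flatMap blockL = 1 :: replicate (3*i+1) 0 := by
    rw [← toL_W, h, toL_W_pw]
  obtain ⟨i', hi'⟩ := lemC _ _ h'
  rcases hi' with ⟨h1, h2⟩ | ⟨h1, h2⟩
  · have : i' = i := by omega
    rw [h2, this, toL_pw]
  · omega

/-- any factorization of `ww K` has the form `pw i * qw j`. -/
lemma factor_ww {K : ℕ} {u v : FreeSemigroup (Fin 5)} (h : u * v = ww K) :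
    (∃ i, u = pw i) ∧ (∃ j, v = qw j) := by
  have hL : toL u ++ toL v = 0 :: (replicate K 2 ++ [3]) := by
    rw [← toL_mul, h, toL_ww]
  obtain ⟨m, hm⟩ : ∃ m, (toL u).length = m + 1 := by
    cases u; exact ⟨_, rfl⟩
  have hv1 : 1 ≤ (toL v).length := by cases v; simp [toL]
  have hlen : (m + 1) + (toL v).length = K + 2 := by
    have h2 := congrArg List.length hL
    simp only [length_append, hm, length_cons, length_replicate] at h2
    simpa using h2
  have hmK : m ≤ K := by omega
  have hu : toL u = 0 :: replicate m 2 := by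
    have h1 : take (m+1) (toL u ++ toL v) = toL u := take_left' hm
    rw [hL] at h1
    rw [← h1, take_succ_cons, take_append_of_le_length (by simpa using hmK),
      take_replicate, Nat.min_eq_left hmK]
  have hv : toL v = replicate (K - m) 2 ++ [3] := by
    have h1 : drop (m+1) (toL u ++ toL v) = toL v := drop_left' hm
    rw [hL] at h1
    rw [← h1, drop_succ_cons, drop_append_of_le_length (by simpa using hmK),
      drop_replicate]
  exact ⟨⟨m, toL_injective (by rw [hu, toL_pw])⟩,
    ⟨K - m, toL_injective (by rw [hv, toL_qw])⟩⟩

/-! ### The algebra maps -/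

noncomputable def X (i : Fin 5) : MonoidAlgebra ℤ (FreeSemigroup (Fin 5)) :=
  MonoidAlgebra.single (of i) 1

noncomputable def ρ : MonoidAlgebra ℤ (FreeSemigroup (Fin 5)) →ₙₐ[ℤ]
    MonoidAlgebra ℤ (FreeSemigroup (Fin 3)) :=
  MonoidAlgebra.liftMagma ℤ ((MonoidAlgebra.ofMagma ℤ (FreeSemigroup (Fin 3))).comp W)

lemma ρ_single (w : FreeSemigroup (Fin 5)) (t : ℤ) :
    ρ (MonoidAlgebra.single w t) = MonoidAlgebra.single (W w) t := by
  rw [ρ, MonoidAlgebra.liftMagma_apply_apply]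
  simp [MonoidAlgebra.ofMagma_apply, MonoidAlgebra.smul_single']

lemma ρ_coeff (u : MonoidAlgebra ℤ (FreeSemigroup (Fin 5))) (v : FreeSemigroup (Fin 3)) :
    (ρ u).coeff v = ∑ w ∈ u.coeff.support, if W w = v then u.coeff w else 0 := by
  rw [ρ, MonoidAlgebra.liftMagma_apply_apply]
  simp [Finsupp.sum_apply, Finsupp.sum]
  refine Finset.sum_congr rfl fun w _ => ?_
  simp [MonoidAlgebra.ofMagma_apply, Finsupp.single_apply, MonoidAlgebra.smul_single']

lemma ker_coeff {u : MonoidAlgebra ℤ (FreeSemigroup (Fin 5))} (hu : ρ u = 0)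
    {w0 : FreeSemigroup (Fin 5)} (huniq : ∀ w, W w = W w0 → w = w0) : u.coeff w0 = 0 := by
  classical
  have h0 : (ρ u).coeff (W w0) = 0 := by rw [hu]; rfl
  rw [ρ_coeff] at h0
  have h1 : ∑ w ∈ u.coeff.support, (if W w = W w0 then u.coeff w else 0)
      = ∑ w ∈ u.coeff.support, (if w = w0 then u.coeff w else 0) := by
    refine Finset.sum_congr rfl fun w _ => ?_
    by_cases h : w = w0
    · subst h; simp
    · rw [if_neg h, if_neg fun hW => h (huniq w hW)]
  rw [h1, Finset.sum_ite_eq' u.coeff.support w0] at h0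
  by_cases hm : w0 ∈ u.coeff.support
  · rwa [if_pos hm] at h0
  · exact Finsupp.notMem_support_iff.1 hm

lemma ker_qw {u} (hu : ρ u = 0) (j : ℕ) : u.coeff (qw j) = 0 :=
  ker_coeff hu fun _ h => fiber_qw h

lemma ker_pw {u} (hu : ρ u = 0) (i : ℕ) : u.coeff (pw i) = 0 :=
  ker_coeff hu fun _ h => fiber_pw h

noncomputable def rel (k : ℕ) : MonoidAlgebra ℤ (FreeSemigroup (Fin 5)) :=
  MonoidAlgebra.single (ww k) 1 - MonoidAlgebra.single (ww' k) 1

lemma ρ_rel (k : ℕ) : ρ (rel k) = 0 := by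
  rw [rel, map_sub, ρ_single, ρ_single, weq, sub_self]

lemma ww_ne_ww' (k k' : ℕ) : ww k ≠ ww' k' := by
  intro h
  have := congrArg (fun z => z.1) h
  simp [ww, ww', FreeSemigroup.head_mul] at this

lemma rel_coeff (k : ℕ) : (rel k).coeff (ww k) = 1 := by
  rw [rel, MonoidAlgebra.coeff_sub, Finsupp.sub_apply, MonoidAlgebra.coeff_single, MonoidAlgebra.coeff_single, Finsupp.single_eq_same,
    Finsupp.single_eq_of_ne' (Ne.symm (ww_ne_ww' k k))]
  ring

lemma mul_ker_coeff {u : MonoidAlgebra ℤ (FreeSemigroup (Fin 5))} (hu : ρ u = 0)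
    (x : MonoidAlgebra ℤ (FreeSemigroup (Fin 5))) (K : ℕ) : (x * u).coeff (ww K) = 0 := by
  classical
  rw [MonoidAlgebra.coeff_mul, Finsupp.sum]
  refine Finset.sum_eq_zero fun a _ => ?_
  rw [Finsupp.sum]
  refine Finset.sum_eq_zero fun b _ => ?_
  split_ifs with h
  · obtain ⟨-, j, rfl⟩ := factor_ww h
    rw [ker_qw hu j, mul_zero]
  · rfl

lemma ker_mul_coeff {u : MonoidAlgebra ℤ (FreeSemigroup (Fin 5))} (hu : ρ u = 0)
    (x : MonoidAlgebra ℤ (FreeSemigroup (Fin 5))) (K : ℕ) : (u * x).coeff (ww K) = 0 := by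
  classical
  rw [MonoidAlgebra.coeff_mul, Finsupp.sum]
  refine Finset.sum_eq_zero fun a ha => ?_
  rw [Finsupp.sum]
  refine Finset.sum_eq_zero fun b _ => ?_
  split_ifs with h
  · obtain ⟨⟨i, rfl⟩, -⟩ := factor_ww h
    rw [ker_pw hu i, zero_mul]
  · rfl

/-! ### Generic lemmas about `idealSpan` -/

section IdealSpan

variable {A B : Type*} [NonUnitalRing A] [Module ℤ A] [NonUnitalRing B] [Module ℤ B]

lemma subset_idealSpan (s : Set A) : s ⊆ idealSpan ℤ s := fun _x hx =>
  Submodule.mem_sInf.2 fun _J hJ => hJ.1 hx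

lemma idealSpan_le {s : Set A} {J : Submodule ℤ A} (h1 : s ⊆ J)
    (h2 : ∀ a b : A, b ∈ J → a * b ∈ J ∧ b * a ∈ J) : idealSpan ℤ s ≤ J :=
  sInf_le ⟨h1, h2⟩

lemma idealSpan_mul_left {s : Set A} (a : A) {b : A} (h : b ∈ idealSpan ℤ s) :
    a * b ∈ idealSpan ℤ s :=
  Submodule.mem_sInf.2 fun J hJ => (hJ.2 a b (Submodule.mem_sInf.1 h J hJ)).1

lemma idealSpan_mul_right {s : Set A} (a : A) {b : A} (h : b ∈ idealSpan ℤ s) :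
    b * a ∈ idealSpan ℤ s :=
  Submodule.mem_sInf.2 fun J hJ => (hJ.2 a b (Submodule.mem_sInf.1 h J hJ)).2

lemma idealSpan_mono {s t : Set A} (h : s ⊆ t) : idealSpan ℤ s ≤ idealSpan ℤ t :=
  idealSpan_le (h.trans (subset_idealSpan t))
    fun a b hb => ⟨idealSpan_mul_left a hb, idealSpan_mul_right a hb⟩

lemma map_idealSpan_le (f : A →ₙₐ[ℤ] B) (s : Set A) {x : A} (hx : x ∈ idealSpan ℤ s) :
    f x ∈ idealSpan ℤ (f '' s) := by
  let fl : A →ₗ[ℤ] B :=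
    { toFun := f
      map_add' := map_add f
      map_smul' := fun r x => by simp }
  have hx' : x ∈ (idealSpan ℤ (f '' s)).comap fl := by
    refine idealSpan_le (J := (idealSpan ℤ (f '' s)).comap fl)
      (fun y hy => ?_) (fun a b hb => ?_) hx
    · show f y ∈ idealSpan ℤ (f '' s)
      exact subset_idealSpan _ ⟨y, hy, rfl⟩
    · have hb' : f b ∈ idealSpan ℤ (f '' s) := hb
      constructor
      · show f (a * b) ∈ idealSpan ℤ (f '' s)
        rw [map_mul]; exact idealSpan_mul_left _ hb'
      · show f (b * a) ∈ idealSpan ℤ (f '' s)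
        rw [map_mul]; exact idealSpan_mul_right _ hb'
  exact hx'

end IdealSpan

/-! ### Generic lemmas about the free algebra -/

section FreeAlg

variable {α : Type*}

lemma single_mem_adjoin (w : FreeSemigroup α) :
    (MonoidAlgebra.single w 1 : MonoidAlgebra ℤ (FreeSemigroup α)) ∈
      NonUnitalAlgebra.adjoin ℤ
        (Set.range fun i : α => (MonoidAlgebra.single (of i) 1 : MonoidAlgebra ℤ _)) := by
  induction w using FreeSemigroup.recOnMul with
  | ih1 i => exact NonUnitalAlgebra.subset_adjoin ℤ ⟨i, rfl⟩
  | ih2 x y hx hy =>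
    have h1 : (MonoidAlgebra.single (of x * y) 1 : MonoidAlgebra ℤ (FreeSemigroup α))
        = MonoidAlgebra.single (of x) 1 * MonoidAlgebra.single y 1 := by
      rw [MonoidAlgebra.single_mul_single, one_mul]
    rw [h1]
    exact mul_mem hx hy

lemma mem_adjoin_all (u : MonoidAlgebra ℤ (FreeSemigroup α)) :
    u ∈ NonUnitalAlgebra.adjoin ℤ
      (Set.range fun i : α => (MonoidAlgebra.single (of i) 1 : MonoidAlgebra ℤ (FreeSemigroup α))) := by
  induction u using MonoidAlgebra.induction with
  | zero => exact zero_mem _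
  | single_add w t rest _ _ ih =>
    refine add_mem ?_ ih
    have h1 : MonoidAlgebra.single w t = t • (MonoidAlgebra.single w (1:ℤ)) := by
      rw [MonoidAlgebra.smul_single', mul_one]
    rw [h1]
    exact SMulMemClass.smul_mem t (single_mem_adjoin w)

lemma gens_top :
    NonUnitalAlgebra.adjoin ℤ
      (Set.range fun i : α => (MonoidAlgebra.single (of i) 1 : MonoidAlgebra ℤ (FreeSemigroup α)))
      = ⊤ :=
  eq_top_iff.2 fun u _ => mem_adjoin_all u

variable {B : Type*} [NonUnitalRing B] [Module ℤ B] [IsScalarTower ℤ B B] [SMulCommClass ℤ B B]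

lemma hom_ext_gen {φ₁ φ₂ : MonoidAlgebra ℤ (FreeSemigroup α) →ₙₐ[ℤ] B}
    (h : ∀ i, φ₁ (MonoidAlgebra.single (of i) 1) = φ₂ (MonoidAlgebra.single (of i) 1)) :
    φ₁ = φ₂ := by
  refine MonoidAlgebra.nonUnitalAlgHom_ext ℤ fun w => ?_
  induction w using FreeSemigroup.recOnMul with
  | ih1 i => exact h i
  | ih2 x y hx hy =>
    have h1 : (MonoidAlgebra.single (of x * y) 1 : MonoidAlgebra ℤ (FreeSemigroup α))
        = MonoidAlgebra.single (of x) 1 * MonoidAlgebra.single y 1 := by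
      rw [MonoidAlgebra.single_mul_single, one_mul]
    rw [h1, map_mul, map_mul, hx, hy]

end FreeAlg

/-! ### The telescope lemma -/

lemma tele (θ : MonoidAlgebra ℤ (FreeSemigroup (Fin 5)) →ₙₐ[ℤ] MonoidAlgebra ℤ (FreeSemigroup (Fin 5)))
    (D : Set (MonoidAlgebra ℤ (FreeSemigroup (Fin 5))))
    (hD : ∀ i, X i - θ (X i) ∈ idealSpan ℤ D) (u : MonoidAlgebra ℤ (FreeSemigroup (Fin 5))) :
    u - θ u ∈ idealSpan ℤ D := by
  have hu : u ∈ NonUnitalAlgebra.adjoin ℤ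
      (Set.range fun i : Fin 5 => (MonoidAlgebra.single (of i) 1 : MonoidAlgebra ℤ _)) := by
    rw [gens_top]; trivial
  refine NonUnitalAlgebra.adjoin_induction (p := fun x _ => x - θ x ∈ idealSpan ℤ D)
    ?_ ?_ ?_ ?_ ?_ hu
  · rintro x ⟨i, rfl⟩
    exact hD i
  · intro x y _ _ hx hy
    rw [map_add, ← sub_add_sub_comm]
    exact add_mem hx hy
  · simpa using zero_mem (idealSpan ℤ D)
  · intro x y _ _ hx hy
    rw [map_mul, show x * y - θ x * θ y = (x - θ x) * y + θ x * (y - θ y) by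
      rw [sub_mul, mul_sub, sub_add_sub_cancel]]
    exact add_mem (idealSpan_mul_right y hx) (idealSpan_mul_left (θ x) hy)
  · intro r x _ hx
    rw [map_smul, ← smul_sub]
    exact Submodule.smul_mem _ r hx

/-! ### Main extraction: evaluation at `ww K` kills the ideal generated by kernel elements
supported away from `ww K` -/

lemma coeff_zero_of_mem_idealSpan (D : Set (MonoidAlgebra ℤ (FreeSemigroup (Fin 5))))
    (hD : ∀ t ∈ D, ρ t = 0) (K : ℕ) (hK : ∀ t ∈ D, t.coeff (ww K) = 0)
    {u : MonoidAlgebra ℤ (FreeSemigroup (Fin 5))} (hu : u ∈ idealSpan ℤ D) :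
    u.coeff (ww K) = 0 := by
  classical
  set L : Set (MonoidAlgebra ℤ (FreeSemigroup (Fin 5))) :=
    {z | ∃ x y, ρ y = 0 ∧ z = x * y} with hL
  set R : Set (MonoidAlgebra ℤ (FreeSemigroup (Fin 5))) :=
    {z | ∃ x y, ρ y = 0 ∧ z = y * x} with hR
  have hNle : idealSpan ℤ D ≤ Submodule.span ℤ (D ∪ L ∪ R) := by
    refine idealSpan_le (fun t ht => Submodule.subset_span (Or.inl (Or.inl ht))) ?_
    intro a b hb
    refine Submodule.span_induction ?_ ?_ ?_ ?_ hb
    · rintro z (( hz | hz ) | hz)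
      · exact ⟨Submodule.subset_span (Or.inl (Or.inr ⟨a, z, hD z hz, rfl⟩)),
          Submodule.subset_span (Or.inr ⟨a, z, hD z hz, rfl⟩)⟩
      · obtain ⟨x, y, hy, rfl⟩ := hz
        exact ⟨Submodule.subset_span (Or.inl (Or.inr ⟨a * x, y, hy, (mul_assoc a x y).symm⟩)),
          Submodule.subset_span (Or.inl (Or.inr ⟨x, y * a, by rw [map_mul, hy, zero_mul],
            (mul_assoc x y a)⟩))⟩
      · obtain ⟨x, y, hy, rfl⟩ := hz
        exact ⟨Submodule.subset_span (Or.inr ⟨x, a * y, by rw [map_mul, hy, mul_zero],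
            (mul_assoc a y x).symm⟩),
          Submodule.subset_span (Or.inr ⟨x * a, y, hy, mul_assoc y x a⟩)⟩
    · simp only [mul_zero, zero_mul]
      exact ⟨zero_mem _, zero_mem _⟩
    · intro x y _ _ hx hy
      rw [mul_add, add_mul]
      exact ⟨add_mem hx.1 hy.1, add_mem hx.2 hy.2⟩
    · intro r x _ hx
      rw [mul_smul_comm, smul_mul_assoc]
      exact ⟨Submodule.smul_mem _ r hx.1, Submodule.smul_mem _ r hx.2⟩
  have hu' : u ∈ Submodule.span ℤ (D ∪ L ∪ R) := hNle hu
  refine Submodule.span_induction ?_ ?_ ?_ ?_ hu'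
  · rintro z (( hz | hz ) | hz)
    · exact hK z hz
    · obtain ⟨x, y, hy, rfl⟩ := hz
      exact mul_ker_coeff hy x K
    · obtain ⟨x, y, hy, rfl⟩ := hz
      exact ker_mul_coeff hy x K
  · rfl
  · intro x y _ _ hx hy
    rw [MonoidAlgebra.coeff_add, Finsupp.add_apply, hx, hy, add_zero]
  · intro r x _ hx
    rw [MonoidAlgebra.coeff_smul, Finsupp.smul_apply, hx, smul_zero]

/-! ### generic lemma about liftMagma on generators -/

section LiftSingle

variable {α : Type*} {B : Type*} [NonUnitalSemiring B] [Module ℤ B] [IsScalarTower ℤ B B]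
  [SMulCommClass ℤ B B]

lemma liftMagma_single (F : α → B) (i : α) :
    (MonoidAlgebra.liftMagma ℤ (FreeSemigroup.lift F) :
        MonoidAlgebra ℤ (FreeSemigroup α) →ₙₐ[ℤ] B) (MonoidAlgebra.single (of i) 1) = F i := by
  rw [MonoidAlgebra.liftMagma_apply_apply]
  simp

end LiftSingle

/-! ### The canonical surjection onto the example subring -/

lemma single_blockS_mem (i : Fin 5) :
    (MonoidAlgebra.single (blockS i) 1 : FreeNUAlg ℤ (Fin 3)) ∈ exampleSubring := by
  apply NonUnitalSubring.subset_closure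
  fin_cases i <;>
    simp [blockS, gen, MonoidAlgebra.single_mul_single]

noncomputable def E (i : Fin 5) : exampleSubring :=
  ⟨MonoidAlgebra.single (blockS i) 1, single_blockS_mem i⟩

noncomputable def π : MonoidAlgebra ℤ (FreeSemigroup (Fin 5)) →ₙₐ[ℤ] ↥exampleSubring :=
  MonoidAlgebra.liftMagma ℤ (FreeSemigroup.lift E)

lemma π_X (i : Fin 5) : π (X i) = E i := liftMagma_single E i

lemma ρ_X (i : Fin 5) : ρ (X i) = MonoidAlgebra.single (blockS i) 1 := by
  rw [X, ρ_single]
  congr 1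

noncomputable def σ : ↥exampleSubring →ₙₐ[ℤ] FreeNUAlg ℤ (Fin 3) :=
  { toFun := Subtype.val
    map_smul' := fun _ _ => rfl
    map_zero' := rfl
    map_add' := fun _ _ => rfl
    map_mul' := fun _ _ => rfl }

lemma coe_π (u : MonoidAlgebra ℤ (FreeSemigroup (Fin 5))) : (π u : FreeNUAlg ℤ (Fin 3)) = ρ u := by
  have h : σ.comp π = ρ := by
    refine hom_ext_gen fun i => ?_
    show σ (π (MonoidAlgebra.single (of i) 1)) = _
    rw [show (MonoidAlgebra.single (of i) (1:ℤ)) = X i from rfl, π_X, ρ_X]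
    rfl
  exact DFunLike.congr_fun h u

lemma ker_π {u : MonoidAlgebra ℤ (FreeSemigroup (Fin 5))} : π u = 0 ↔ ρ u = 0 := by
  constructor
  · intro h
    rw [← coe_π, h]
    rfl
  · intro h
    apply Subtype.ext
    rw [coe_π, h]
    rfl

lemma π_surj : Function.Surjective π := by
  intro y
  have key : ∀ x (_ : x ∈ exampleSubring), ∃ u, ρ u = x := by
    intro x hx
    induction hx using NonUnitalSubring.closure_induction with
    | mem z hz =>
      simp only [Set.mem_insert_iff, Set.mem_singleton_iff] at hz
      rcases hz with rfl | rfl | rfl | rfl | rfl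
      · exact ⟨X 0, by rw [ρ_X]; simp [blockS, gen, MonoidAlgebra.single_mul_single]⟩
      · exact ⟨X 1, by rw [ρ_X]; simp [blockS, gen, MonoidAlgebra.single_mul_single]⟩
      · exact ⟨X 2, by rw [ρ_X]; simp [blockS, gen, MonoidAlgebra.single_mul_single]⟩
      · exact ⟨X 3, by rw [ρ_X]; simp [blockS, gen, MonoidAlgebra.single_mul_single]⟩
      · exact ⟨X 4, by rw [ρ_X]; simp [blockS, gen, MonoidAlgebra.single_mul_single]⟩
    | zero => exact ⟨0, map_zero ρ⟩
    | add x y _ _ hx hy =>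
      obtain ⟨u, hu⟩ := hx; obtain ⟨v, hv⟩ := hy
      exact ⟨u + v, by rw [map_add, hu, hv]⟩
    | neg x _ hx =>
      obtain ⟨u, hu⟩ := hx
      exact ⟨-u, by rw [map_neg, hu]⟩
    | mul x y _ _ hx hy =>
      obtain ⟨u, hu⟩ := hx; obtain ⟨v, hv⟩ := hy
      exact ⟨u * v, by rw [map_mul, hu, hv]⟩
  obtain ⟨u, hu⟩ := key y y.2
  exact ⟨u, Subtype.ext (by rw [coe_π, hu])⟩

/-! ### Finite generation -/

theorem fg : NUAlgFG ℤ ↥exampleSubring := by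
  classical
  refine ⟨Finset.image (fun i => π (X i)) Finset.univ, ?_⟩
  have h1 : NonUnitalSubalgebra.map π
      (NonUnitalAlgebra.adjoin ℤ
        (Set.range fun i : Fin 5 =>
          (MonoidAlgebra.single (of i) 1 : MonoidAlgebra ℤ (FreeSemigroup (Fin 5))))) = ⊤ := by
    rw [gens_top, NonUnitalAlgebra.eq_top_iff]
    intro y
    obtain ⟨u, hu⟩ := π_surj y
    exact NonUnitalSubalgebra.mem_map.2 ⟨u, trivial, hu⟩
  rw [NonUnitalAlgHom.map_adjoin] at h1
  have h2 : (↑(Finset.image (fun i => π (X i)) Finset.univ) : Set ↥exampleSubring)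
      = π '' (Set.range fun i : Fin 5 =>
          (MonoidAlgebra.single (of i) 1 : MonoidAlgebra ℤ (FreeSemigroup (Fin 5)))) := by
    ext z
    simp [X, Set.range]
  rw [h2]
  exact h1

/-! ### Not finitely presented -/

set_option maxHeartbeats 1000000 in
theorem not_fp : ¬ NUAlgFP ℤ ↥exampleSubring := by
  classical
  rintro ⟨n, f, hf, s, hs⟩
  -- lift the canonical generators through `f`
  choose gmap hgmap using fun i : Fin 5 => hf (π (X i))
  -- lift the images of the generators of the presentation through `π`
  choose hmap hhmap using fun i : Fin n =>
    π_surj (f (MonoidAlgebra.single (of i) 1))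
  let g : MonoidAlgebra ℤ (FreeSemigroup (Fin 5)) →ₙₐ[ℤ] FreeNUAlg ℤ (Fin n) :=
    MonoidAlgebra.liftMagma ℤ (FreeSemigroup.lift gmap)
  let h : FreeNUAlg ℤ (Fin n) →ₙₐ[ℤ] MonoidAlgebra ℤ (FreeSemigroup (Fin 5)) :=
    MonoidAlgebra.liftMagma ℤ (FreeSemigroup.lift hmap)
  have hg_X : ∀ i, g (X i) = gmap i := fun i => liftMagma_single gmap i
  have hh_X : ∀ i : Fin n, h (MonoidAlgebra.single (of i) 1) = hmap i := fun i =>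
    liftMagma_single hmap i
  have hfg : f.comp g = π := by
    refine hom_ext_gen fun i => ?_
    show f (g (MonoidAlgebra.single (of i) 1)) = π (MonoidAlgebra.single (of i) 1)
    rw [show (MonoidAlgebra.single (of i) (1:ℤ)) = X i from rfl, hg_X, hgmap]
  have hπh : π.comp h = f := by
    refine hom_ext_gen fun i => ?_
    show π (h (MonoidAlgebra.single (of i) 1)) = f (MonoidAlgebra.single (of i) 1)
    rw [hh_X, hhmap]
  have hfg' : ∀ u, f (g u) = π u := fun u => DFunLike.congr_fun hfg u
  have hπh' : ∀ u, π (h u) = f u := fun u => DFunLike.congr_fun hπh u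
  set θ : MonoidAlgebra ℤ (FreeSemigroup (Fin 5)) →ₙₐ[ℤ]
      MonoidAlgebra ℤ (FreeSemigroup (Fin 5)) := h.comp g with hθ
  have hθ' : ∀ u, θ u = h (g u) := fun _ => rfl
  -- the finite set of generators of the kernel ideal
  let D1 : Finset (MonoidAlgebra ℤ (FreeSemigroup (Fin 5))) :=
    Finset.image (fun i => X i - θ (X i)) Finset.univ
  let D2 : Finset (MonoidAlgebra ℤ (FreeSemigroup (Fin 5))) := s.image h
  let D : Finset (MonoidAlgebra ℤ (FreeSemigroup (Fin 5))) := D1 ∪ D2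
  have hDker : ∀ t ∈ D, ρ t = 0 := by
    intro t ht
    rcases Finset.mem_union.1 ht with ht | ht
    · obtain ⟨i, -, rfl⟩ := Finset.mem_image.1 ht
      rw [← ker_π, map_sub, hθ', hπh', hfg', sub_self]
    · obtain ⟨t', ht', rfl⟩ := Finset.mem_image.1 ht
      rw [← ker_π, hπh']
      exact (hs t').2 (subset_idealSpan _ ht')
  -- choose K large
  set K : ℕ := D.sup (fun t => t.coeff.support.sup FreeSemigroup.length) with hKdef
  have hK : ∀ t ∈ D, t.coeff (ww K) = 0 := by
    intro t ht
    by_contra hne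
    have hmem : ww K ∈ t.coeff.support := Finsupp.mem_support_iff.2 hne
    have h1 : (ww K).length ≤ t.coeff.support.sup FreeSemigroup.length := Finset.le_sup hmem
    have h2 : t.coeff.support.sup FreeSemigroup.length ≤ K :=
      Finset.le_sup (f := fun t => t.coeff.support.sup FreeSemigroup.length) ht
    have h3 : (ww K).length = K + 2 := by
      rw [← length_toL, length_ww]
    omega
  -- the relation `rel K` lies in the ideal generated by `D`
  have hrel : rel K ∈ idealSpan ℤ (D : Set (MonoidAlgebra ℤ (FreeSemigroup (Fin 5)))) := by
    have hD1 : rel K - θ (rel K) ∈ idealSpan ℤ (D1 : Set _) := by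
      refine tele θ _ (fun i => subset_idealSpan _ ?_) (rel K)
      exact Finset.mem_coe.2 (Finset.mem_image.2 ⟨i, Finset.mem_univ i, rfl⟩)
    have hgrel : g (rel K) ∈ idealSpan ℤ (s : Set (FreeNUAlg ℤ (Fin n))) := by
      refine (hs _).1 ?_
      rw [hfg']
      exact ker_π.2 (ρ_rel K)
    have hD2 : θ (rel K) ∈ idealSpan ℤ (D2 : Set _) := by
      have h1 : h (g (rel K)) ∈ idealSpan ℤ (h '' (s : Set (FreeNUAlg ℤ (Fin n)))) :=
        map_idealSpan_le h _ hgrel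
      rw [hθ']
      rwa [← Finset.coe_image] at h1
    have hsub1 : (D1 : Set (MonoidAlgebra ℤ (FreeSemigroup (Fin 5)))) ⊆
        (D : Set (MonoidAlgebra ℤ (FreeSemigroup (Fin 5)))) :=
      Finset.coe_subset.2 Finset.subset_union_left
    have hsub2 : (D2 : Set (MonoidAlgebra ℤ (FreeSemigroup (Fin 5)))) ⊆
        (D : Set (MonoidAlgebra ℤ (FreeSemigroup (Fin 5)))) :=
      Finset.coe_subset.2 Finset.subset_union_right
    have hsum := add_mem (idealSpan_mono hsub1 hD1) (idealSpan_mono hsub2 hD2)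
    simpa using hsum
  have h0 := coeff_zero_of_mem_idealSpan (D : Set _) hDker K hK hrel
  rw [rel_coeff K] at h0
  exact one_ne_zero h0

end Ex15

/-- The subring `R` of the free ring `ℤ⟨a,b,c⟩` (on three noncommuting
generators, without identity) generated by the five elements `ba, ba², a³, a²c, ac` is
finitely generated but not finitely presented as a ring (`ℤ`-algebra). -/
theorem exampleSubring_fg_not_fp :
    NUAlgFG ℤ exampleSubring ∧ ¬ NUAlgFP ℤ exampleSubring :=
  ⟨Ex15.fg, Ex15.not_fp⟩
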